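/- Non-existence of a second-order Stein operator with linear coefficients for the product of two independent N(1,1) random variables: there do not exist real constants a, b, c, d, e, f, not all zero, such that E[(aZ + b) g''(Z) + (cZ + d) g'(Z) + (eZ + f) g(Z)] = 0 for every polynomial g, where Z = XY with X, Y independent N(1,1). -/

import Mathlib

open ProbabilityTheory MeasureTheory Polynomial Real Filter


lemma aux_integrable_pow_gauss (n : ℕ) :
    Integrable (fun x : ℝ => x ^ n * Real.exp (-(1/2) * x ^ 2)) := by
  have : (-1 : ℝ) < (n : ℝ) := lt_of_lt_of_le (by norm_num) (Nat.cast_nonneg n)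
  simpa [Real.rpow_natCast] using
    integrable_rpow_mul_exp_neg_mul_sq (b := (1:ℝ)/2) (by norm_num) this

lemma aux_tendsto_cocompact (n : ℕ) :
    Tendsto (fun x : ℝ => -(x ^ n * Real.exp (-(1/2) * x ^ 2))) (Filter.cocompact ℝ) (nhds 0) := by
  have h := tendsto_rpow_abs_mul_exp_neg_mul_sq_cocompact (a := (1:ℝ)/2) (by norm_num) (n : ℝ)
  refine squeeze_zero_norm (fun x => ?_) h
  rw [norm_neg, norm_mul, norm_pow, Real.norm_eq_abs, Real.norm_eq_abs,
    abs_of_pos (Real.exp_pos _), Real.rpow_natCast]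

lemma aux_I_rec (n : ℕ) :
    ∫ x : ℝ, x ^ (n+2) * Real.exp (-(1/2) * x ^ 2)
      = ((n : ℝ) + 1) * ∫ x : ℝ, x ^ n * Real.exp (-(1/2) * x ^ 2) := by
  have hderiv : ∀ x : ℝ, HasDerivAt (fun x : ℝ => -(x ^ (n+1) * Real.exp (-(1/2) * x ^ 2)))
      (x ^ (n+2) * Real.exp (-(1/2) * x^2) - ((n:ℝ)+1) * (x ^ n * Real.exp (-(1/2) * x^2))) x := by
    intro x
    have h1 : HasDerivAt (fun x : ℝ => x ^ (n+1)) (((n:ℝ)+1) * x ^ n) x := by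
      simpa using hasDerivAt_pow (n+1) x
    have h2 : HasDerivAt (fun x : ℝ => Real.exp (-(1/2) * x ^ 2))
        (Real.exp (-(1/2) * x ^ 2) * (-(1/2) * (2 * x ^ 1))) x := by
      exact (((hasDerivAt_pow 2 x).const_mul (-(1/2 : ℝ))).exp).congr_deriv (by norm_num)
    have H := (h1.mul h2).neg
    exact H.congr_deriv (by ring)
  have hint : Integrable (fun x : ℝ =>
      x ^ (n+2) * Real.exp (-(1/2) * x^2) - ((n:ℝ)+1) * (x ^ n * Real.exp (-(1/2) * x^2))) :=
    (aux_integrable_pow_gauss (n+2)).sub ((aux_integrable_pow_gauss n).const_mul _)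
  have h0 := integral_of_hasDerivAt_of_tendsto hderiv hint
    ((aux_tendsto_cocompact (n+1)).mono_left _root_.atBot_le_cocompact)
    ((aux_tendsto_cocompact (n+1)).mono_left _root_.atTop_le_cocompact)
  rw [integral_sub (aux_integrable_pow_gauss (n+2)) ((aux_integrable_pow_gauss n).const_mul _),
    integral_const_mul] at h0
  linarith [h0]

lemma aux_I1 : ∫ x : ℝ, x ^ 1 * Real.exp (-(1/2) * x ^ 2) = 0 := by
  have hderiv : ∀ x : ℝ, HasDerivAt (fun x : ℝ => -Real.exp (-(1/2) * x ^ 2))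
      (x ^ 1 * Real.exp (-(1/2) * x^2)) x := by
    intro x
    have h2 : HasDerivAt (fun x : ℝ => Real.exp (-(1/2) * x ^ 2))
        (Real.exp (-(1/2) * x ^ 2) * (-(1/2) * (2 * x ^ 1))) x := by
      exact (((hasDerivAt_pow 2 x).const_mul (-(1/2 : ℝ))).exp).congr_deriv (by norm_num)
    have H := h2.neg
    exact H.congr_deriv (by ring)
  have htb : Tendsto (fun x : ℝ => -Real.exp (-(1/2) * x ^ 2)) (Filter.cocompact ℝ) (nhds 0) := by
    have := aux_tendsto_cocompact 0
    simpa using this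
  have h0 := integral_of_hasDerivAt_of_tendsto hderiv (aux_integrable_pow_gauss 1)
    (htb.mono_left _root_.atBot_le_cocompact)
    (htb.mono_left _root_.atTop_le_cocompact)
  simpa using h0


lemma aux_pdf01 (x : ℝ) :
    gaussianPDFReal 0 1 x = (Real.sqrt (2 * π))⁻¹ * Real.exp (-(1/2) * x ^ 2) := by
  rw [gaussianPDFReal]
  push_cast
  rw [mul_one, sub_zero]
  congr 1
  ring

lemma aux_meas_pdf : Measurable fun x : ℝ => (gaussianPDFReal 0 1 x).toNNReal :=
  (measurable_gaussianPDFReal 0 1).real_toNNReal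

lemma aux_integral_gauss0 (g : ℝ → ℝ) :
    ∫ x, g x ∂(gaussianReal 0 1) = ∫ x, gaussianPDFReal 0 1 x * g x := by
  rw [gaussianReal_of_var_ne_zero _ one_ne_zero]
  rw [show (gaussianPDF 0 1) = fun x => ((gaussianPDFReal 0 1 x).toNNReal : ENNReal) from rfl]
  rw [integral_withDensity_eq_integral_smul aux_meas_pdf g]
  congr 1
  funext x
  rw [NNReal.smul_def, Real.coe_toNNReal _ (gaussianPDFReal_nonneg _ _ _)]
  rfl

lemma aux_int_pow_g0 (n : ℕ) : Integrable (fun x : ℝ => x ^ n) (gaussianReal 0 1) := by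
  rw [gaussianReal_of_var_ne_zero _ one_ne_zero]
  rw [show (gaussianPDF 0 1) = fun x => ((gaussianPDFReal 0 1 x).toNNReal : ENNReal) from rfl]
  rw [integrable_withDensity_iff_integrable_smul aux_meas_pdf]
  have : Integrable (fun x : ℝ => (Real.sqrt (2 * π))⁻¹ * (x ^ n * Real.exp (-(1/2) * x ^ 2))) :=
    (aux_integrable_pow_gauss n).const_mul _
  refine this.congr ?_
  filter_upwards with x
  rw [NNReal.smul_def, Real.coe_toNNReal _ (gaussianPDFReal_nonneg _ _ _), aux_pdf01]
  simp [smul_eq_mul]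
  ring

lemma aux_J_eq (n : ℕ) : ∫ x, x ^ n ∂(gaussianReal 0 1)
    = (Real.sqrt (2 * π))⁻¹ * ∫ x : ℝ, x ^ n * Real.exp (-(1/2) * x ^ 2) := by
  rw [aux_integral_gauss0, ← integral_const_mul]
  congr 1
  funext x
  rw [aux_pdf01]
  ring

lemma aux_J0 : ∫ x, x ^ 0 ∂(gaussianReal 0 1) = 1 := by simp
lemma aux_J1 : ∫ x, x ^ 1 ∂(gaussianReal 0 1) = 0 := by rw [aux_J_eq, aux_I1]; ring
lemma aux_J_rec (n : ℕ) : ∫ x, x ^ (n+2) ∂(gaussianReal 0 1)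
    = ((n : ℝ) + 1) * ∫ x, x ^ n ∂(gaussianReal 0 1) := by
  rw [aux_J_eq, aux_J_eq, aux_I_rec]; ring

lemma aux_J2 : ∫ x, x ^ 2 ∂(gaussianReal 0 1) = 1 := by
  have := aux_J_rec 0; rw [aux_J0] at this; norm_num at this; exact this
lemma aux_J3 : ∫ x, x ^ 3 ∂(gaussianReal 0 1) = 0 := by
  have := aux_J_rec 1; rw [aux_J1] at this; norm_num at this; exact this
lemma aux_J4 : ∫ x, x ^ 4 ∂(gaussianReal 0 1) = 3 := by
  have := aux_J_rec 2; rw [aux_J2] at this; norm_num at this; exact this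
lemma aux_J5 : ∫ x, x ^ 5 ∂(gaussianReal 0 1) = 0 := by
  have := aux_J_rec 3; rw [aux_J3] at this; norm_num at this; exact this
lemma aux_J6 : ∫ x, x ^ 6 ∂(gaussianReal 0 1) = 15 := by
  have := aux_J_rec 4; rw [aux_J4] at this; norm_num at this; exact this


lemma aux_map01 : (gaussianReal 0 1).map (· + 1) = gaussianReal 1 1 := by
  simpa using gaussianReal_map_add_const (μ := 0) (v := 1) 1

lemma aux_expand (k : ℕ) : (fun x : ℝ => (x + 1) ^ k)
    = fun x => ∑ i ∈ Finset.range (k+1), (k.choose i : ℝ) * x ^ i := by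
  funext x
  rw [add_pow]
  refine Finset.sum_congr rfl fun i _ => by ring

lemma aux_E_eq (n : ℕ) : ∫ x, x ^ n ∂(gaussianReal 1 1)
    = ∑ i ∈ Finset.range (n+1), (n.choose i : ℝ) * ∫ x, x ^ i ∂(gaussianReal 0 1) := by
  rw [← aux_map01, integral_map (by fun_prop) (by fun_prop)]
  rw [show (fun x : ℝ => (x + 1) ^ n) = fun x => ∑ i ∈ Finset.range (n+1), (n.choose i : ℝ) * x ^ i from aux_expand n]
  rw [integral_finset_sum _ (fun i _ => (aux_int_pow_g0 i).const_mul _)]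
  simp [integral_const_mul]

lemma aux_J1' : ∫ x, x ∂(gaussianReal 0 1) = 0 := by
  have := aux_J1; simpa using this

lemma aux_E0 : ∫ x, x ^ 0 ∂(gaussianReal 1 1) = 1 := by
  rw [aux_E_eq]; simp [Finset.sum_range_succ, aux_J0]
lemma aux_E1 : ∫ x, x ^ 1 ∂(gaussianReal 1 1) = 1 := by
  rw [aux_E_eq]; simp [Finset.sum_range_succ, aux_J0, aux_J1, aux_J1']
lemma aux_E2 : ∫ x, x ^ 2 ∂(gaussianReal 1 1) = 2 := by
  rw [aux_E_eq]; simp [Finset.sum_range_succ, aux_J0, aux_J1, aux_J2, aux_J1']; norm_num [Nat.choose]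
lemma aux_E3 : ∫ x, x ^ 3 ∂(gaussianReal 1 1) = 4 := by
  rw [aux_E_eq]; simp [Finset.sum_range_succ, aux_J0, aux_J1, aux_J2, aux_J3, aux_J1']; norm_num [Nat.choose]
lemma aux_E4 : ∫ x, x ^ 4 ∂(gaussianReal 1 1) = 10 := by
  rw [aux_E_eq]; simp [Finset.sum_range_succ, aux_J0, aux_J1, aux_J2, aux_J3, aux_J4, aux_J1']; norm_num [Nat.choose]
lemma aux_E5 : ∫ x, x ^ 5 ∂(gaussianReal 1 1) = 26 := by
  rw [aux_E_eq]; simp [Finset.sum_range_succ, aux_J0, aux_J1, aux_J2, aux_J3, aux_J4, aux_J5, aux_J1']; norm_num [Nat.choose]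
lemma aux_E6 : ∫ x, x ^ 6 ∂(gaussianReal 1 1) = 76 := by
  rw [aux_E_eq]; simp [Finset.sum_range_succ, aux_J0, aux_J1, aux_J2, aux_J3, aux_J4, aux_J5, aux_J6, aux_J1']; norm_num [Nat.choose]

lemma aux_int_pow_g1 (n : ℕ) : Integrable (fun x : ℝ => x ^ n) (gaussianReal 1 1) := by
  rw [← aux_map01, integrable_map_measure (by fun_prop) (by fun_prop)]
  have : Integrable (fun x : ℝ => ∑ i ∈ Finset.range (n+1), (n.choose i : ℝ) * x ^ i)
      (gaussianReal 0 1) := integrable_finset_sum _ (fun i _ => (aux_int_pow_g0 i).const_mul _)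
  refine this.congr ?_
  filter_upwards with x
  exact (congrFun (aux_expand n) x).symm

noncomputable def auxP : Measure (ℝ × ℝ) := (gaussianReal 1 1).prod (gaussianReal 1 1)

lemma aux_int_pow_P (k : ℕ) : Integrable (fun q : ℝ × ℝ => (q.1 * q.2) ^ k) auxP := by
  simp_rw [mul_pow]
  exact (aux_int_pow_g1 k).mul_prod (aux_int_pow_g1 k)

lemma aux_mom (k : ℕ) : ∫ q : ℝ × ℝ, (q.1 * q.2) ^ k ∂auxP
    = (∫ x, x ^ k ∂(gaussianReal 1 1)) ^ 2 := by
  simp_rw [mul_pow]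
  rw [auxP, sq]
  exact integral_prod_mul (f := fun x : ℝ => x ^ k) (g := fun x : ℝ => x ^ k)

lemma auxP_def : auxP = (gaussianReal 1 1).prod (gaussianReal 1 1) := rfl



lemma aux_master (c0 c1 c2 c3 c4 c5 c6 : ℝ) :
    ∫ q : ℝ × ℝ, (c0 + c1 * (q.1 * q.2) + c2 * (q.1 * q.2) ^ 2 + c3 * (q.1 * q.2) ^ 3
      + c4 * (q.1 * q.2) ^ 4 + c5 * (q.1 * q.2) ^ 5 + c6 * (q.1 * q.2) ^ 6) ∂auxP
    = c0 + c1 * 1 + c2 * 4 + c3 * 16 + c4 * 100 + c5 * 676 + c6 * 5776 := by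
  have I : ∀ (r : ℝ) (k : ℕ), Integrable (fun q : ℝ × ℝ => r * (q.1 * q.2) ^ k) auxP :=
    fun r k => (aux_int_pow_P k).const_mul r
  have e1 : (fun q : ℝ × ℝ => (c0 + c1 * (q.1 * q.2) + c2 * (q.1 * q.2) ^ 2 + c3 * (q.1 * q.2) ^ 3
      + c4 * (q.1 * q.2) ^ 4 + c5 * (q.1 * q.2) ^ 5 + c6 * (q.1 * q.2) ^ 6))
      = fun q : ℝ × ℝ => c0 * (q.1 * q.2) ^ 0 + (c1 * (q.1 * q.2) ^ 1 + (c2 * (q.1 * q.2) ^ 2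
        + (c3 * (q.1 * q.2) ^ 3 + (c4 * (q.1 * q.2) ^ 4 + (c5 * (q.1 * q.2) ^ 5
        + c6 * (q.1 * q.2) ^ 6))))) := funext fun q => by ring
  have A0 := integral_add (μ := auxP) (I c0 0) ((I c1 1).add ((I c2 2).add ((I c3 3).add ((I c4 4).add ((I c5 5).add (I c6 6))))))
  have A1 := integral_add (μ := auxP) (I c1 1) ((I c2 2).add ((I c3 3).add ((I c4 4).add ((I c5 5).add (I c6 6)))))
  have A2 := integral_add (μ := auxP) (I c2 2) ((I c3 3).add ((I c4 4).add ((I c5 5).add (I c6 6))))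
  have A3 := integral_add (μ := auxP) (I c3 3) ((I c4 4).add ((I c5 5).add (I c6 6)))
  have A4 := integral_add (μ := auxP) (I c4 4) ((I c5 5).add (I c6 6))
  have A5 := integral_add (μ := auxP) (I c5 5) (I c6 6)
  simp only [Pi.add_apply] at A0 A1 A2 A3 A4 A5
  rw [e1, A0, A1, A2, A3, A4, A5]
  simp_rw [integral_const_mul, aux_mom]
  rw [aux_E0, aux_E1, aux_E2, aux_E3, aux_E4, aux_E5, aux_E6]
  norm_num
  ring

/-- There is no (nonzero) second order Stein operator with linear coefficients,
acting on polynomials, for the product of two independent `N(1,1)` random variables. -/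
theorem no_second_order_linear_stein_operator :
    ¬ ∃ a b c d e f : ℝ,
      ¬ (a = 0 ∧ b = 0 ∧ c = 0 ∧ d = 0 ∧ e = 0 ∧ f = 0) ∧
      ∀ g : Polynomial ℝ,
        ∫ q : ℝ × ℝ,
            ((a * (q.1 * q.2) + b) * (derivative (derivative g)).eval (q.1 * q.2)
              + (c * (q.1 * q.2) + d) * (derivative g).eval (q.1 * q.2)
              + (e * (q.1 * q.2) + f) * g.eval (q.1 * q.2))
            ∂((gaussianReal 1 1).prod (gaussianReal 1 1)) = 0 := by
  rintro ⟨a, b, c, d, e, f, hne, h⟩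
  have key : ∀ (g : Polynomial ℝ) (c0 c1 c2 c3 c4 c5 c6 : ℝ),
      (∀ q : ℝ × ℝ, (a * (q.1 * q.2) + b) * (derivative (derivative g)).eval (q.1 * q.2)
          + (c * (q.1 * q.2) + d) * (derivative g).eval (q.1 * q.2)
          + (e * (q.1 * q.2) + f) * g.eval (q.1 * q.2)
          = c0 + c1 * (q.1 * q.2) + c2 * (q.1 * q.2) ^ 2 + c3 * (q.1 * q.2) ^ 3
            + c4 * (q.1 * q.2) ^ 4 + c5 * (q.1 * q.2) ^ 5 + c6 * (q.1 * q.2) ^ 6) →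
      c0 + c1 * 1 + c2 * 4 + c3 * 16 + c4 * 100 + c5 * 676 + c6 * 5776 = 0 := by
    intro g c0 c1 c2 c3 c4 c5 c6 hpt
    rw [← aux_master c0 c1 c2 c3 c4 c5 c6, auxP_def, ← h g]
    exact integral_congr_ae (Filter.Eventually.of_forall fun q => (hpt q).symm)
  have h0 := key 1 f e 0 0 0 0 0 (fun q => by simp; ring)
  have h1 := key X d (c + f) e 0 0 0 0 (fun q => by simp; ring)
  have h2 := key (X ^ 2) (2 * b) (2 * a + 2 * d) (2 * c + f) e 0 0 0
    (fun q => by simp [derivative_X_pow]; push_cast; ring)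
  have h3 := key (X ^ 3) 0 (6 * b) (6 * a + 3 * d) (3 * c + f) e 0 0
    (fun q => by simp [derivative_X_pow]; push_cast; ring)
  have h4 := key (X ^ 4) 0 0 (12 * b) (12 * a + 4 * d) (4 * c + f) e 0
    (fun q => by simp [derivative_X_pow]; push_cast; ring)
  have h5 := key (X ^ 5) 0 0 0 (20 * b) (20 * a + 5 * d) (5 * c + f) e
    (fun q => by simp [derivative_X_pow]; push_cast; ring)
  exact hne ⟨by linarith, by linarith, by linarith, by linarith, by linarith, by linarith⟩
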